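/- The two-dimensional Fourier transform of the conical kernel e^{−‖x‖} is 2π(1 + ‖k‖²)^{−3/2}: for every k ∈ ℝ², ∫_{ℝ²} e^{−‖x‖} e^{−i⟨k,x⟩} dx = 2π (1 + ‖k‖²)^{−3/2}, where the integral is over x ∈ ℝ² with Lebesgue measure and ⟨·,·⟩ is the Euclidean inner product. Equivalently, the Green's function of the Yukawa operator L^{3/2} = (I − Δ)^{3/2} in two dimensions with α = 1 is G_{1/2}(‖x‖) = e^{−‖x‖}/(2π). -/

import Mathlib

open Real MeasureTheory Set Filter Complex


lemma integrableOn_g1 (c : ℝ) :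
    IntegrableOn (fun t : ℝ => rexp (-(t - c / t) ^ 2)) (Ioi 0) := by
  apply Integrable.mono' (g := fun t => rexp (2 * c) * rexp (-1 * t ^ 2))
  · exact ((integrable_exp_neg_mul_sq one_pos).const_mul _).restrict
  · apply Measurable.aestronglyMeasurable
    fun_prop
  · filter_upwards [ae_restrict_mem measurableSet_Ioi] with t ht
    rw [Real.norm_eq_abs, _root_.abs_of_nonneg (Real.exp_pos _).le, ← Real.exp_add]
    apply Real.exp_le_exp.2
    have ht0 : t ≠ 0 := ne_of_gt ht
    have h1 : (t - c / t) ^ 2 = t ^ 2 - 2 * c + (c / t) ^ 2 := by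
      field_simp; ring
    nlinarith [sq_nonneg (c / t)]

lemma psi_facts {c : ℝ} (hc : 0 < c) :
    ((fun t : ℝ => c / t) '' Ioi 0 = Ioi 0) ∧ InjOn (fun t : ℝ => c / t) (Ioi 0) ∧
      ∀ t ∈ Ioi (0:ℝ), HasDerivWithinAt (fun t : ℝ => c / t) (-(c / t ^ 2)) (Ioi 0) t := by
  refine ⟨?_, ?_, ?_⟩
  · ext y
    simp only [mem_image, mem_Ioi]
    constructor
    · rintro ⟨t, ht, rfl⟩; positivity
    · intro hy; exact ⟨c / y, by positivity, by field_simp⟩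
  · intro s hs t ht h
    simp only [mem_Ioi] at hs ht
    field_simp at h
    linarith
  · intro t ht
    have ht0 : t ≠ 0 := ne_of_gt ht
    have : HasDerivAt (fun t : ℝ => c / t) (-(c / t ^ 2)) t := by
      simpa [div_eq_mul_inv, neg_div] using ((hasDerivAt_inv ht0).const_mul c)
    exact this.hasDerivWithinAt

-- change of variables t ↦ c/t
lemma Kprime_eq_K {c : ℝ} (hc : 0 < c) :
    ∫ t in Ioi (0:ℝ), (c / t ^ 2) * rexp (-(t - c / t) ^ 2)
      = ∫ t in Ioi (0:ℝ), rexp (-(t - c / t) ^ 2) := by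
  obtain ⟨him, hinj, hder⟩ := psi_facts hc
  have := integral_image_eq_integral_abs_deriv_smul measurableSet_Ioi hder hinj
    (fun t => rexp (-(t - c / t) ^ 2))
  rw [him] at this
  rw [this]
  refine setIntegral_congr_fun measurableSet_Ioi fun t ht => ?_
  have ht0 : (t:ℝ) ≠ 0 := ne_of_gt ht
  have h2 : c / (c / t) = t := by field_simp
  rw [smul_eq_mul, h2, abs_neg, _root_.abs_of_nonneg (by positivity : 0 ≤ c / t ^ 2)]
  ring_nf

lemma integrableOn_g2 {c : ℝ} (hc : 0 < c) :
    IntegrableOn (fun t : ℝ => (c / t ^ 2) * rexp (-(t - c / t) ^ 2)) (Ioi 0) := by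
  obtain ⟨him, hinj, hder⟩ := psi_facts hc
  have h := (integrableOn_image_iff_integrableOn_abs_deriv_smul measurableSet_Ioi hder hinj
    (fun t => rexp (-(t - c / t) ^ 2))).mp (by rw [him]; exact integrableOn_g1 c)
  apply h.congr_fun ?_ measurableSet_Ioi
  intro t ht
  have ht0 : (t:ℝ) ≠ 0 := ne_of_gt ht
  have h2 : c / (c / t) = t := by field_simp
  simp only [smul_eq_mul, h2, abs_neg, _root_.abs_of_nonneg (by positivity : 0 ≤ c / t ^ 2)]
  ring_nf

section
variable {c : ℝ}

lemma phi_image (hc : 0 < c) : (fun t : ℝ => t - c / t) '' Ioi 0 = univ := by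
  ext w
  simp only [mem_image, mem_Ioi, mem_univ, iff_true]
  have hd : 0 < w ^ 2 + 4 * c := by positivity
  set t := (w + Real.sqrt (w ^ 2 + 4 * c)) / 2 with htdef
  have hs : Real.sqrt (w ^ 2 + 4 * c) ^ 2 = w ^ 2 + 4 * c := Real.sq_sqrt hd.le
  have habs : |w| < Real.sqrt (w ^ 2 + 4 * c) := by
    have : |w| = Real.sqrt (w ^ 2) := (Real.sqrt_sq_eq_abs w).symm
    rw [this]
    exact Real.sqrt_lt_sqrt (sq_nonneg w) (by linarith)
  have ht : 0 < t := by
    have := neg_abs_le w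
    have := abs_nonneg w
    rw [htdef]; nlinarith [habs]
  refine ⟨t, ht, ?_⟩
  have h2 : t ^ 2 - w * t - c = 0 := by
    rw [htdef]; nlinarith [hs]
  field_simp
  nlinarith [h2]

lemma phi_inj (hc : 0 < c) : InjOn (fun t : ℝ => t - c / t) (Ioi 0) := by
  intro s hs t ht h
  simp only [mem_Ioi] at hs ht
  simp only at h
  have : (s - t) * (s * t + c) = 0 := by
    field_simp at h
    nlinarith [h]
  rcases mul_eq_zero.mp this with h' | h'
  · linarith
  · nlinarith

lemma phi_deriv (hc : 0 < c) :
    ∀ t ∈ Ioi (0:ℝ), HasDerivWithinAt (fun t : ℝ => t - c / t) (1 + c / t ^ 2) (Ioi 0) t := by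
  intro t ht
  have ht0 : t ≠ 0 := ne_of_gt ht
  have : HasDerivAt (fun t : ℝ => t - c / t) (1 + c / t ^ 2) t := by
    have h1 : HasDerivAt (fun t : ℝ => c / t) (-(c / t ^ 2)) t := by
      simpa [div_eq_mul_inv, neg_div] using ((hasDerivAt_inv ht0).const_mul c)
    exact ((hasDerivAt_id' t).sub h1).congr_deriv (by ring)
  exact this.hasDerivWithinAt
end
lemma glasser {c : ℝ} (hc : 0 < c) :
    ∫ t in Ioi (0:ℝ), rexp (-(t - c / t) ^ 2) = Real.sqrt π / 2 := by
  have hgauss : ∫ w : ℝ, rexp (-w ^ 2) = Real.sqrt π := by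
    simpa using integral_gaussian 1
  have hcv := integral_image_eq_integral_abs_deriv_smul measurableSet_Ioi (phi_deriv hc)
    (phi_inj hc) (fun w => rexp (-w ^ 2))
  rw [phi_image hc] at hcv
  have hsplit : ∫ t in Ioi (0:ℝ), |1 + c / t ^ 2| • rexp (-(t - c / t) ^ 2)
      = (∫ t in Ioi (0:ℝ), rexp (-(t - c / t) ^ 2))
        + ∫ t in Ioi (0:ℝ), (c / t ^ 2) * rexp (-(t - c / t) ^ 2) := by
    rw [← integral_add (integrableOn_g1 c) (integrableOn_g2 hc)]
    refine setIntegral_congr_fun measurableSet_Ioi fun t ht => ?_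
    have ht0 : (0:ℝ) < t := ht
    rw [smul_eq_mul, _root_.abs_of_nonneg (by positivity : (0:ℝ) ≤ 1 + c / t ^ 2)]
    ring
  have : Real.sqrt π = 2 * ∫ t in Ioi (0:ℝ), rexp (-(t - c / t) ^ 2) := by
    rw [← hgauss, ← setIntegral_univ, hcv, hsplit, Kprime_eq_K hc]; ring
  linarith [this]

lemma subord {c : ℝ} (hc : 0 ≤ c) :
    ∫ t in Ioi (0:ℝ), rexp (-t ^ 2 - c ^ 2 / t ^ 2) = Real.sqrt π / 2 * rexp (-(2 * c)) := by
  rcases hc.eq_or_lt with h | h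
  · subst h
    simp only [ne_eq, OfNat.ofNat_ne_zero, not_false_eq_true, zero_pow, zero_div, sub_zero,
      mul_zero, neg_zero, Real.exp_zero, mul_one]
    simpa using integral_gaussian_Ioi 1
  · have heq : ∀ t ∈ Ioi (0:ℝ), rexp (-t ^ 2 - c ^ 2 / t ^ 2)
        = rexp (-(2 * c)) * rexp (-(t - c / t) ^ 2) := by
      intro t ht
      have ht0 : (t:ℝ) ≠ 0 := ne_of_gt ht
      rw [← Real.exp_add]
      congr 1
      field_simp
      ring
    rw [setIntegral_congr_fun measurableSet_Ioi heq, integral_const_mul, glasser h]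
    ring

noncomputable abbrev E2 : Type := EuclideanSpace ℝ (Fin 2)

noncomputable def F (k : E2) (t : ℝ) (x : E2) : ℂ :=
  (rexp (-t ^ 2 - ‖x‖ ^ 2 / (4 * t ^ 2)) : ℂ) * Complex.exp (-(Complex.I * ((inner ℝ k x : ℝ) : ℂ)))

-- step 1: pointwise identity
lemma step1 (k : E2) (x : E2) :
    (rexp (-‖x‖) : ℂ) * Complex.exp (-(Complex.I * ((inner ℝ k x : ℝ) : ℂ)))
      = ((2 / Real.sqrt π : ℝ) : ℂ) * ∫ t in Ioi (0:ℝ), F k t x := by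
  have h0 : ∫ t in Ioi (0:ℝ), rexp (-t ^ 2 - ‖x‖ ^ 2 / (4 * t ^ 2))
      = Real.sqrt π / 2 * rexp (-‖x‖) := by
    have := subord (c := ‖x‖ / 2) (by positivity)
    have heq : ∀ t : ℝ, -t ^ 2 - (‖x‖ / 2) ^ 2 / t ^ 2 = -t ^ 2 - ‖x‖ ^ 2 / (4 * t ^ 2) := by
      intro t; ring_nf
    simp_rw [heq] at this
    rw [this]
    congr 1
    ring_nf
  have hsqrt : Real.sqrt π ≠ 0 := by positivity
  have hrexp : rexp (-‖x‖) = (2 / Real.sqrt π) * ∫ t in Ioi (0:ℝ),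
      rexp (-t ^ 2 - ‖x‖ ^ 2 / (4 * t ^ 2)) := by
    rw [h0]; field_simp
  calc (rexp (-‖x‖) : ℂ) * Complex.exp (-(Complex.I * ((inner ℝ k x : ℝ) : ℂ)))
      = ((2 / Real.sqrt π : ℝ) : ℂ) * ((∫ t in Ioi (0:ℝ),
          rexp (-t ^ 2 - ‖x‖ ^ 2 / (4 * t ^ 2)) : ℝ) : ℂ)
          * Complex.exp (-(Complex.I * ((inner ℝ k x : ℝ) : ℂ))) := by
        rw [← Complex.ofReal_mul, ← hrexp]
    _ = ((2 / Real.sqrt π : ℝ) : ℂ) * ∫ t in Ioi (0:ℝ), F k t x := by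
        rw [mul_assoc]
        congr 1
        simp only [F]
        rw [integral_mul_const]
        congr 1
        exact (integral_ofReal (𝕜 := ℂ)).symm

-- norm of F
lemma norm_F (k : E2) (t : ℝ) (x : E2) :
    ‖F k t x‖ = rexp (-t ^ 2 - ‖x‖ ^ 2 / (4 * t ^ 2)) := by
  rw [F, norm_mul, Complex.norm_real, Complex.norm_exp]
  simp [Real.norm_eq_abs, _root_.abs_of_nonneg (Real.exp_pos _).le]

-- rewriting F in Gaussian form, for t ≠ 0
lemma F_eq (k : E2) {t : ℝ} (ht : t ≠ 0) (x : E2) :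
    F k t x = Complex.exp (-((t ^ 2 : ℝ) : ℂ)) *
      Complex.exp (-(((1 / (4 * t ^ 2) : ℝ)) : ℂ) * (‖x‖ : ℂ) ^ 2
        + (-Complex.I) * ((inner ℝ k x : ℝ) : ℂ)) := by
  rw [F, Complex.ofReal_exp, ← Complex.exp_add, ← Complex.exp_add]
  congr 1
  push_cast
  have h4 : (4 : ℂ) * (t:ℂ) ^ 2 ≠ 0 := by
    simp [pow_eq_zero_iff, Complex.ofReal_ne_zero, ht]
  have ht' : (t:ℂ) ≠ 0 := Complex.ofReal_ne_zero.mpr ht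
  field_simp
  ring

-- the inner integral over x, for t > 0
lemma step4 (k : E2) {t : ℝ} (ht : 0 < t) :
    ∫ x : E2, F k t x
      = ((4 * π * t ^ 2 * rexp (-(1 + ‖k‖ ^ 2) * t ^ 2) : ℝ) : ℂ) := by
  have ht0 : t ≠ 0 := ne_of_gt ht
  have hbre : 0 < (((1 / (4 * t ^ 2) : ℝ)) : ℂ).re := by
    simp only [Complex.ofReal_re]
    positivity
  calc ∫ x : E2, F k t x
      = Complex.exp (-((t ^ 2 : ℝ) : ℂ)) * ∫ x : E2,
        Complex.exp (-(((1 / (4 * t ^ 2) : ℝ)) : ℂ) * (‖x‖ : ℂ) ^ 2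
          + (-Complex.I) * ((inner ℝ k x : ℝ) : ℂ)) := by
        simp_rw [F_eq k ht0]
        rw [integral_const_mul]
    _ = Complex.exp (-((t ^ 2 : ℝ) : ℂ)) *
        (((π : ℂ) / ((1 / (4 * t ^ 2) : ℝ) : ℂ)) ^
            ((Module.finrank ℝ E2) / 2 : ℂ) *
          Complex.exp ((-Complex.I) ^ 2 * (‖k‖ : ℂ) ^ 2 /
            (4 * (((1 / (4 * t ^ 2) : ℝ)) : ℂ)))) := by
        rw [GaussianFourier.integral_cexp_neg_mul_sq_norm_add hbre (-Complex.I) k]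
    _ = ((4 * π * t ^ 2 * rexp (-(1 + ‖k‖ ^ 2) * t ^ 2) : ℝ) : ℂ) := by
        have hfr : (Module.finrank ℝ E2) = 2 := finrank_euclideanSpace_fin
        rw [hfr]
        have h2 : ((2 : ℕ) / 2 : ℂ) = 1 := by norm_num
        rw [h2, Complex.cpow_one]
        have hI : (-Complex.I) ^ 2 = -1 := by
          rw [neg_pow]; simp [Complex.I_sq]
        rw [hI]
        have hb0 : (((1 / (4 * t ^ 2) : ℝ)) : ℂ) ≠ 0 := by
          simp only [ne_eq, Complex.ofReal_eq_zero]
          positivity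
        rw [mul_comm (Complex.exp _), mul_assoc, ← Complex.exp_add]
        push_cast
        have h4 : (4 : ℂ) * (t:ℂ) ^ 2 ≠ 0 := by
          simp [pow_eq_zero_iff, Complex.ofReal_ne_zero, ht0]
        congr 1
        · field_simp
        · congr 1
          field_simp
          ring

lemma aesm_F (k : E2) : AEStronglyMeasurable (fun p : ℝ × E2 => F k p.1 p.2)
    ((volume.restrict (Ioi 0)).prod volume) := by
  apply Measurable.aestronglyMeasurable
  unfold F
  have h1 : Measurable fun p : ℝ × E2 => (inner ℝ k p.2 : ℝ) := by
    exact (continuous_const.inner continuous_snd).measurable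
  fun_prop

lemma int_F (k : E2) {t : ℝ} (ht : 0 < t) : Integrable (F k t) := by
  have hbre : 0 < (((1 / (4 * t ^ 2) : ℝ)) : ℂ).re := by
    simp only [Complex.ofReal_re]; positivity
  have h := (GaussianFourier.integrable_cexp_neg_mul_sq_norm_add (V := E2) hbre
    (-Complex.I) k).const_mul (Complex.exp (-((t ^ 2 : ℝ) : ℂ)))
  exact h.congr (ae_of_all _ fun x => (F_eq k (ne_of_gt ht) x).symm)

lemma int_prod (k : E2) : Integrable (fun p : ℝ × E2 => F k p.1 p.2)
    ((volume.restrict (Ioi 0)).prod volume) := by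
  rw [integrable_prod_iff (aesm_F k)]
  constructor
  · filter_upwards [ae_restrict_mem measurableSet_Ioi] with t ht
    exact int_F k ht
  · have hr : ∀ t : ℝ, t ^ (2:ℝ) = t ^ 2 := fun t => by
      rw [← Real.rpow_natCast t 2]; norm_num
    have hnice : IntegrableOn (fun t : ℝ => 4 * π * (t ^ 2 * rexp (-1 * t ^ 2))) (Ioi 0) := by
      have h0 : IntegrableOn (fun t : ℝ => 4 * π * (t ^ (2:ℝ) * rexp (-1 * t ^ 2)))
          (Ioi 0) := (integrableOn_rpow_mul_exp_neg_mul_sq one_pos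
            (by norm_num : (-1:ℝ) < 2)).const_mul (4 * π)
      exact h0.congr_fun (fun t ht => by dsimp only; rw [hr t]) measurableSet_Ioi
    apply hnice.congr
    filter_upwards [ae_restrict_mem measurableSet_Ioi] with t ht
    have ht0 : t ≠ 0 := ne_of_gt ht
    have hsplit : ∀ x : E2, ‖F k t x‖ = rexp (-t ^ 2) * rexp (-(1 / (4 * t ^ 2)) * ‖x‖ ^ 2) := by
      intro x
      rw [norm_F, ← Real.exp_add]
      congr 1
      field_simp
      ring
    simp_rw [hsplit]
    rw [integral_const_mul, GaussianFourier.integral_rexp_neg_mul_sq_norm (by positivity)]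
    have hfr : (Module.finrank ℝ E2) = 2 := finrank_euclideanSpace_fin
    rw [hfr]
    have h2 : ((2 : ℕ) / 2 : ℝ) = 1 := by norm_num
    rw [h2, Real.rpow_one]
    field_simp

lemma real_val (k : E2) :
    ∫ t in Ioi (0:ℝ), 4 * π * (t ^ 2 * rexp (-(1 + ‖k‖ ^ 2) * t ^ 2))
      = π * Real.sqrt π * (1 + ‖k‖ ^ 2) ^ (-(3 / 2 : ℝ)) := by
  have hb : (0:ℝ) < 1 + ‖k‖ ^ 2 := by positivity
  have h := integral_rpow_mul_exp_neg_mul_rpow (p := 2) (q := 2) two_pos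
    (by norm_num : (-1:ℝ) < 2) hb
  have hcongr : ∫ t in Ioi (0:ℝ), t ^ (2:ℝ) * rexp (-(1 + ‖k‖ ^ 2) * t ^ (2:ℝ))
      = ∫ t in Ioi (0:ℝ), t ^ 2 * rexp (-(1 + ‖k‖ ^ 2) * t ^ 2) := by
    refine setIntegral_congr_fun measurableSet_Ioi fun t ht => ?_
    rw [← Real.rpow_natCast t 2]; norm_num
  rw [hcongr] at h
  rw [integral_const_mul, h]
  have hg : Real.Gamma ((2 + 1) / 2) = Real.sqrt π / 2 := by
    have : ((2:ℝ) + 1) / 2 = 1 / 2 + 1 := by norm_num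
    rw [this, Real.Gamma_add_one (by norm_num), Real.Gamma_one_half_eq]
    ring
  rw [hg]
  have he : (-((2:ℝ) + 1) / 2) = -(3 / 2 : ℝ) := by norm_num
  rw [he]
  ring

/-- The two-dimensional Fourier transform of the conical kernel `e^{−‖x‖}` is
`2π (1 + ‖k‖²)^{−3/2}`; equivalently, the Green's function of the Yukawa operator
`(I − Δ)^{3/2}` in two dimensions with `α = 1` is `e^{−‖x‖}/(2π)`. -/
theorem fourier_transform_conical_kernel (k : EuclideanSpace ℝ (Fin 2)) :
    ∫ x : EuclideanSpace ℝ (Fin 2),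
        (Real.exp (-‖x‖) : ℂ) * Complex.exp (-(Complex.I * ((inner ℝ k x : ℝ) : ℂ))) =
      (2 * Real.pi : ℂ) * (((1 + ‖k‖ ^ 2) ^ (-(3 / 2 : ℝ)) : ℝ) : ℂ) := by
  have hswap := (integral_integral_swap (f := F k)
    (μ := volume.restrict (Ioi 0)) (ν := (volume : Measure E2)) (int_prod k)).symm
  calc ∫ x : E2, (rexp (-‖x‖) : ℂ) * Complex.exp (-(Complex.I * ((inner ℝ k x : ℝ) : ℂ)))
      = ∫ x : E2, ((2 / Real.sqrt π : ℝ) : ℂ) * ∫ t in Ioi (0:ℝ), F k t x := by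
        simp_rw [step1 k]
    _ = ((2 / Real.sqrt π : ℝ) : ℂ) * ∫ x : E2, ∫ t in Ioi (0:ℝ), F k t x := by
        rw [integral_const_mul]
    _ = ((2 / Real.sqrt π : ℝ) : ℂ) * ∫ t in Ioi (0:ℝ), ∫ x : E2, F k t x := by
        rw [hswap]
    _ = ((2 / Real.sqrt π : ℝ) : ℂ) * ∫ t in Ioi (0:ℝ),
          ((4 * π * t ^ 2 * rexp (-(1 + ‖k‖ ^ 2) * t ^ 2) : ℝ) : ℂ) := by
        congr 1
        exact setIntegral_congr_fun measurableSet_Ioi fun t ht => step4 k ht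
    _ = ((2 / Real.sqrt π : ℝ) : ℂ) *
          ((∫ t in Ioi (0:ℝ), 4 * π * (t ^ 2 * rexp (-(1 + ‖k‖ ^ 2) * t ^ 2)) : ℝ) : ℂ) := by
        congr 1
        have heq : ∫ t in Ioi (0:ℝ), ((4 * π * t ^ 2 * rexp (-(1 + ‖k‖ ^ 2) * t ^ 2) : ℝ) : ℂ)
            = ∫ t in Ioi (0:ℝ), ((4 * π * (t ^ 2 * rexp (-(1 + ‖k‖ ^ 2) * t ^ 2)) : ℝ) : ℂ) :=
          setIntegral_congr_fun measurableSet_Ioi fun t ht => by push_cast; ring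
        rw [heq]
        exact integral_ofReal (𝕜 := ℂ)
    _ = (2 * Real.pi : ℂ) * (((1 + ‖k‖ ^ 2) ^ (-(3 / 2 : ℝ)) : ℝ) : ℂ) := by
        rw [real_val k, ← Complex.ofReal_mul]
        have hs : Real.sqrt π ≠ 0 := by positivity
        have : 2 / Real.sqrt π * (π * Real.sqrt π * (1 + ‖k‖ ^ 2) ^ (-(3 / 2 : ℝ)))
            = 2 * π * ((1 + ‖k‖ ^ 2) ^ (-(3 / 2 : ℝ))) := by
          field_simp
        rw [this]
        push_cast
        ring
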